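/- In ℝⁿ, for any two unit vectors u, v, the composition of the filters μ_u and μ_v commutes: μ_u ∘ μ_v = μ_v ∘ μ_u, where the composition of filters on ℝⁿ×ℝⁿ containing the neighborhood filter of the diagonal is defined by (μ∘ν)(U)=1 iff there exist A,B with μ(A)=ν(B)=1 and A∘B ⊆ U, and A∘B = {(x,z) : ∃y, (x,y)∈A, (y,z)∈B}. -/

import Mathlib

/-- The uniform directional filter μ_u on ℝⁿ × ℝⁿ, generated by the sets
V⁺(u,ε,λ). -/
noncomputable def unifDirFilter {n : ℕ} (u : EuclideanSpace ℝ (Fin n)) :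
    Filter (EuclideanSpace ℝ (Fin n) × EuclideanSpace ℝ (Fin n)) :=
  Filter.generate {V | ∃ ε > (0:ℝ), ∃ lam ∈ Set.Ioo (0:ℝ) 1,
    V = {p : EuclideanSpace ℝ (Fin n) × EuclideanSpace ℝ (Fin n) |
      Metric.infDist p.2 ((fun t : ℝ => p.1 + t • u) '' Set.Icc 0 ε)
        < lam * ‖p.1 - p.2‖}}

/-- Translation invariance of a relation. -/
def TransInv {n : ℕ} (S : Set (EuclideanSpace ℝ (Fin n) × EuclideanSpace ℝ (Fin n))) : Prop :=
  ∀ x y w : EuclideanSpace ℝ (Fin n), (x, y) ∈ S → (x + w, y + w) ∈ S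

lemma gen_transInv {n : ℕ} (u : EuclideanSpace ℝ (Fin n))
    (V : Set (EuclideanSpace ℝ (Fin n) × EuclideanSpace ℝ (Fin n)))
    (hV : V ∈ {V | ∃ ε > (0:ℝ), ∃ lam ∈ Set.Ioo (0:ℝ) 1,
      V = {p : EuclideanSpace ℝ (Fin n) × EuclideanSpace ℝ (Fin n) |
        Metric.infDist p.2 ((fun t : ℝ => p.1 + t • u) '' Set.Icc 0 ε)
          < lam * ‖p.1 - p.2‖}}) : TransInv V := by
  obtain ⟨ε, hε, lam, hlam, rfl⟩ := hV
  intro x y w h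
  simp only [Set.mem_setOf_eq] at h ⊢
  have himg : (fun t : ℝ => (x + w) + t • u) '' Set.Icc 0 ε
      = (fun z => z + w) '' ((fun t : ℝ => x + t • u) '' Set.Icc 0 ε) := by
    rw [← Set.image_comp]
    apply Set.image_congr'
    intro t
    simp [Function.comp]
    abel
  have hiso : Isometry (fun z : EuclideanSpace ℝ (Fin n) => z + w) :=
    (IsometryEquiv.addRight w).isometry
  have : Metric.infDist (y + w) ((fun t : ℝ => (x + w) + t • u) '' Set.Icc 0 ε)
      = Metric.infDist y ((fun t : ℝ => x + t • u) '' Set.Icc 0 ε) := by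
    rw [himg, Metric.infDist_image hiso]
  rw [this]
  have hnorm : ‖x + w - (y + w)‖ = ‖x - y‖ := by
    congr 1
    abel
  rw [hnorm]
  exact h

lemma exists_transInv_subset {n : ℕ} (u : EuclideanSpace ℝ (Fin n))
    (A : Set (EuclideanSpace ℝ (Fin n) × EuclideanSpace ℝ (Fin n)))
    (hA : A ∈ unifDirFilter u) :
    ∃ A' ∈ unifDirFilter u, A' ⊆ A ∧ TransInv A' := by
  rw [unifDirFilter, Filter.mem_generate_iff] at hA
  obtain ⟨t, hts, htf, hsub⟩ := hA
  refine ⟨⋂₀ t, ?_, hsub, ?_⟩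
  · exact (Filter.sInter_mem htf).2 fun U hU => Filter.GenerateSets.basic (hts hU)
  · intro x y w h
    rw [Set.mem_sInter] at h ⊢
    exact fun S hSt => gen_transInv u _ (hts hSt) x y w (h S hSt)

lemma compRel_swap_subset {n : ℕ}
    (A B : Set (EuclideanSpace ℝ (Fin n) × EuclideanSpace ℝ (Fin n)))
    (hA : TransInv A) (hB : TransInv B) : SetRel.comp A B ⊆ SetRel.comp B A := by
  rintro ⟨x, z⟩ ⟨y, hxy, hyz⟩
  refine ⟨x + (z - y), ?_, ?_⟩
  · have := hB y z (x - y) hyz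
    have hx : y + (x - y) = x := by abel
    have hz : z + (x - y) = x + (z - y) := by abel
    rwa [hx, hz] at this
  · have := hA x y (z - y) hxy
    have hy : y + (z - y) = z := by abel
    rwa [hy] at this

theorem directional_composition_commutes {n : ℕ}
    (u v : EuclideanSpace ℝ (Fin n)) (hu : ‖u‖ = 1) (hv : ‖v‖ = 1) :
    ∀ U : Set (EuclideanSpace ℝ (Fin n) × EuclideanSpace ℝ (Fin n)),
      (∃ A ∈ unifDirFilter u, ∃ B ∈ unifDirFilter v, SetRel.comp A B ⊆ U) ↔
      (∃ A ∈ unifDirFilter v, ∃ B ∈ unifDirFilter u, SetRel.comp A B ⊆ U) := by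
  have key : ∀ (a b : EuclideanSpace ℝ (Fin n))
      (U : Set (EuclideanSpace ℝ (Fin n) × EuclideanSpace ℝ (Fin n))),
      (∃ A ∈ unifDirFilter a, ∃ B ∈ unifDirFilter b, SetRel.comp A B ⊆ U) →
      (∃ A ∈ unifDirFilter b, ∃ B ∈ unifDirFilter a, SetRel.comp A B ⊆ U) := by
    rintro a b U ⟨A, hA, B, hB, hAB⟩
    obtain ⟨A', hA', hA'sub, hA'inv⟩ := exists_transInv_subset a A hA
    obtain ⟨B', hB', hB'sub, hB'inv⟩ := exists_transInv_subset b B hB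
    refine ⟨B', hB', A', hA', ?_⟩
    intro p hp
    apply hAB
    exact SetRel.comp_subset_comp hA'sub hB'sub (compRel_swap_subset B' A' hB'inv hA'inv hp)
  exact fun U => ⟨key u v U, key v u U⟩
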